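/- If a finite game is harmonic, then the function H(x) = −∑_{i ∈ N} ∑_{α_i ∈ A_i} log x_{i,α_i} is a constant of motion of the replicator dynamics: along any interior solution trajectory x(t) of ẋ_{i,α_i} = x_{i,α_i}(u_i(α_i; x_{-i}) − u_i(x)), one has dH(x(t))/dt = 0. -/

import Mathlib

open Finset

noncomputable section

def mixedPayoff {ι : Type*} [Fintype ι] [DecidableEq ι]
    {A : ι → Type*} [∀ i, Fintype (A i)]
    (u : ι → (∀ j, A j) → ℝ) (i : ι) (x : ∀ j, A j → ℝ) : ℝ :=
  ∑ α : ∀ j, A j, u i α * ∏ j, x j (α j)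

def unilateralPayoff {ι : Type*} [Fintype ι] [DecidableEq ι]
    {A : ι → Type*} [∀ i, Fintype (A i)] [∀ i, DecidableEq (A i)]
    (u : ι → (∀ j, A j) → ℝ) (i : ι) (a : A i) (x : ∀ j, A j → ℝ) : ℝ :=
  mixedPayoff u i (Function.update x i (fun b => if b = a then 1 else 0))

section aux

set_option linter.unusedSectionVars false

variable {ι : Type*} [Fintype ι] [DecidableEq ι]
    {A : ι → Type*} [∀ i, Fintype (A i)] [∀ i, DecidableEq (A i)]

lemma prod_update_pt (x : ∀ j, A j → ℝ) (i : ι) (d : A i → ℝ) (α : ∀ j, A j) :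
    ∏ j, (Function.update x i d) j (α j)
      = d (α i) * ∏ j ∈ Finset.univ.erase i, x j (α j) := by
  rw [← Finset.mul_prod_erase Finset.univ (fun j => (Function.update x i d) j (α j))
      (Finset.mem_univ i), Function.update_self]
  congr 1
  refine Finset.prod_congr rfl fun j hj => ?_
  rw [Function.update_of_ne (Finset.ne_of_mem_erase hj)]

lemma prod_update_arg (x : ∀ j, A j → ℝ) (i : ι) (b : A i) (α : ∀ j, A j) :
    ∏ j, x j ((Function.update α i b) j)
      = x i b * ∏ j ∈ Finset.univ.erase i, x j (α j) := by
  rw [← Finset.mul_prod_erase Finset.univ (fun j => x j ((Function.update α i b) j))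
      (Finset.mem_univ i), Function.update_self]
  congr 1
  refine Finset.prod_congr rfl fun j hj => ?_
  rw [Function.update_of_ne (Finset.ne_of_mem_erase hj)]

/-- the involutive reindexing `(α, c) ↦ (update α i c, α i)` -/
def swapEquiv (i : ι) : ((∀ j, A j) × A i) ≃ ((∀ j, A j) × A i) where
  toFun p := (Function.update p.1 i p.2, p.1 i)
  invFun p := (Function.update p.1 i p.2, p.1 i)
  left_inv p := by
    ext <;> simp [Function.update_idem]
  right_inv p := by
    ext <;> simp [Function.update_idem]

lemma key (u : ι → (∀ j, A j) → ℝ)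
    (harm : ∀ α : ∀ j, A j,
      ∑ i, ∑ b : A i, (u i (Function.update α i b) - u i α) = 0)
    (x : ∀ j, A j → ℝ) (hsum : ∀ j, ∑ a, x j a = 1) :
    ∑ i, ∑ b : A i, (unilateralPayoff u i b x - mixedPayoff u i x) = 0 := by
  have hA : ∀ i : ι, ∑ b : A i, unilateralPayoff u i b x
      = ∑ α : ∀ j, A j, u i α * ∏ j ∈ Finset.univ.erase i, x j (α j) := by
    intro i
    have h1 : ∀ b : A i, unilateralPayoff u i b x
        = ∑ α : ∀ j, A j, u i α * ((if α i = b then (1:ℝ) else 0)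
            * ∏ j ∈ Finset.univ.erase i, x j (α j)) := by
      intro b
      unfold unilateralPayoff mixedPayoff
      refine Finset.sum_congr rfl fun α _ => ?_
      rw [prod_update_pt]
    simp only [h1]
    rw [Finset.sum_comm]
    refine Finset.sum_congr rfl fun α _ => ?_
    rw [← Finset.mul_sum, ← Finset.sum_mul]
    simp
  have hB : ∀ i : ι, ∑ b : A i, ∑ α : ∀ j, A j,
        u i (Function.update α i b) * ∏ j, x j (α j)
      = ∑ α : ∀ j, A j, u i α * ∏ j ∈ Finset.univ.erase i, x j (α j) := by
    intro i
    have heq := Fintype.sum_equiv (swapEquiv (A := A) i)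
      (fun p => u i (Function.update p.1 i p.2) * ∏ j, x j (p.1 j))
      (fun p => u i p.1 * ∏ j, x j ((Function.update p.1 i p.2) j)) ?_
    · calc ∑ b : A i, ∑ α : ∀ j, A j, u i (Function.update α i b) * ∏ j, x j (α j)
          = ∑ p : ((∀ j, A j) × A i), u i (Function.update p.1 i p.2) * ∏ j, x j (p.1 j) := by
            rw [Fintype.sum_prod_type, Finset.sum_comm]
        _ = ∑ p : ((∀ j, A j) × A i), u i p.1 * ∏ j, x j ((Function.update p.1 i p.2) j) := heq
        _ = ∑ α : ∀ j, A j, u i α * ∏ j ∈ Finset.univ.erase i, x j (α j) := by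
            rw [Fintype.sum_prod_type]
            refine Finset.sum_congr rfl fun α _ => ?_
            have h2 : ∀ b : A i, u i α * ∏ j, x j ((Function.update α i b) j)
                = x i b * (u i α * ∏ j ∈ Finset.univ.erase i, x j (α j)) := by
              intro b; rw [prod_update_arg]; ring
            simp only [h2, ← Finset.sum_mul, hsum i, one_mul]
    · intro p
      simp only [swapEquiv, Equiv.coe_fn_mk]
      rw [Function.update_idem, Function.update_eq_self]
  have hC : ∑ i, ∑ b : A i, (∑ α : ∀ j, A j,
        u i (Function.update α i b) * ∏ j, x j (α j) - mixedPayoff u i x) = 0 := by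
    calc ∑ i, ∑ b : A i, (∑ α : ∀ j, A j,
          u i (Function.update α i b) * ∏ j, x j (α j) - mixedPayoff u i x)
        = ∑ i, ∑ b : A i, ∑ α : ∀ j, A j,
            (u i (Function.update α i b) - u i α) * ∏ j, x j (α j) := by
          refine Finset.sum_congr rfl fun i _ => Finset.sum_congr rfl fun b _ => ?_
          unfold mixedPayoff
          rw [← Finset.sum_sub_distrib]
          exact Finset.sum_congr rfl fun α _ => by ring
      _ = ∑ i, ∑ α : ∀ j, A j, ∑ b : A i,
            (u i (Function.update α i b) - u i α) * ∏ j, x j (α j) := by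
          exact Finset.sum_congr rfl fun i _ => Finset.sum_comm
      _ = ∑ α : ∀ j, A j, ∑ i, ∑ b : A i,
            (u i (Function.update α i b) - u i α) * ∏ j, x j (α j) := Finset.sum_comm
      _ = 0 := by
          refine Finset.sum_eq_zero fun α _ => ?_
          simp only [← Finset.sum_mul]
          rw [harm α, zero_mul]
  have hC' : ∑ i, ∑ b : A i, ∑ α : ∀ j, A j,
        u i (Function.update α i b) * ∏ j, x j (α j)
      = ∑ i, ∑ b : A i, mixedPayoff u i x := by
    simp only [Finset.sum_sub_distrib] at hC
    linarith
  have hfin : ∑ i, ∑ b : A i, unilateralPayoff u i b x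
      = ∑ i, ∑ b : A i, mixedPayoff u i x := by
    calc ∑ i, ∑ b : A i, unilateralPayoff u i b x
        = ∑ i, ∑ α : ∀ j, A j, u i α * ∏ j ∈ Finset.univ.erase i, x j (α j) :=
          Finset.sum_congr rfl fun i _ => hA i
      _ = ∑ i, ∑ b : A i, ∑ α : ∀ j, A j,
            u i (Function.update α i b) * ∏ j, x j (α j) :=
          Finset.sum_congr rfl fun i _ => (hB i).symm
      _ = ∑ i, ∑ b : A i, mixedPayoff u i x := hC'
  simp only [Finset.sum_sub_distrib, hfin, sub_self]

end aux

/-- **Harmonic games admit a constant of motion for the replicator dynamics**: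
if the game is harmonic, then along any interior solution `x(t)` of the replicator
dynamics `ẋ_{i,α_i} = x_{i,α_i}(u_i(α_i;x_{-i}) − u_i(x))`, the function
`H(x) = −∑_i ∑_{α_i} log x_{i,α_i}` has zero time derivative. -/
theorem harmonic_constant_of_motion
    {ι : Type*} [Fintype ι] [DecidableEq ι]
    (A : ι → Type*) [∀ i, Fintype (A i)] [∀ i, DecidableEq (A i)]
    (u : ι → (∀ j, A j) → ℝ)
    (harm : ∀ α : ∀ j, A j,
      ∑ i, ∑ b : A i, (u i (Function.update α i b) - u i α) = 0)
    (x : ℝ → ∀ j, A j → ℝ)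
    (hpos : ∀ t j a, 0 < x t j a) (hsum : ∀ t j, ∑ a, x t j a = 1)
    (hode : ∀ t (i : ι) (a : A i),
      HasDerivAt (fun s => x s i a)
        (x t i a * (unilateralPayoff u i a (x t) - mixedPayoff u i (x t))) t)
    (t : ℝ) :
    HasDerivAt (fun s => -∑ i, ∑ a : A i, Real.log (x s i a)) 0 t := by
  have hlog : ∀ (i : ι) (a : A i), HasDerivAt (fun s => Real.log (x s i a))
      (unilateralPayoff u i a (x t) - mixedPayoff u i (x t)) t := by
    intro i a
    have h := (hode t i a).log (ne_of_gt (hpos t i a))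
    have hx : x t i a * (unilateralPayoff u i a (x t) - mixedPayoff u i (x t)) / x t i a
        = unilateralPayoff u i a (x t) - mixedPayoff u i (x t) :=
      mul_div_cancel_left₀ _ (ne_of_gt (hpos t i a))
    rwa [hx] at h
  have hsumderiv : HasDerivAt (fun s => ∑ i, ∑ a : A i, Real.log (x s i a))
      (∑ i, ∑ a : A i, (unilateralPayoff u i a (x t) - mixedPayoff u i (x t))) t := by
    refine HasDerivAt.fun_sum fun i _ => ?_
    exact HasDerivAt.fun_sum fun a _ => hlog i a
  have h0 := key u harm (x t) (hsum t)
  have := hsumderiv.neg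
  rw [h0, neg_zero] at this
  exact this

end
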